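/- Let F be a field, let n ≥ 1, let x_1,…,x_n ∈ F be pairwise distinct, and let m ≥ n − 1 be an integer. Then ∑_{j=1}^{n} x_j^m / ∏_{k≠j}(x_j − x_k) = h_{m−n+1}(x_1,…,x_n), where h_{m−n+1} is the complete homogeneous symmetric polynomial of degree m−n+1 evaluated at (x_1,…,x_n). -/

import Mathlib

open Finset

section helpers
variable {F : Type*} [CommRing F] {n : ℕ}

lemma erase_zero_eq (n : ℕ) :
    (Finset.univ.erase (0 : Fin (n+1))) = Finset.univ.image Fin.succ := by
  ext k
  induction k using Fin.cases with
  | zero => simp [(Fin.succ_ne_zero _).symm, eq_comm]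
  | succ k => simp [Fin.succ_ne_zero]

lemma erase_succ_eq (i : Fin n) :
    (Finset.univ.erase (i.succ : Fin (n+1))) =
      insert (0 : Fin (n+1)) ((Finset.univ.erase i).image Fin.succ) := by
  ext k
  induction k using Fin.cases with
  | zero => simp [(Fin.succ_ne_zero _).symm]
  | succ k => simp [Fin.succ_ne_zero, Fin.succ_inj]

lemma prod_erase_zero (f : Fin (n+1) → F) :
    ∏ k ∈ Finset.univ.erase (0 : Fin (n+1)), f k = ∏ k : Fin n, f k.succ := by
  rw [erase_zero_eq, Finset.prod_image (fun a _ b _ h => Fin.succ_injective _ h)]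

lemma prod_erase_succ (f : Fin (n+1) → F) (i : Fin n) :
    ∏ k ∈ Finset.univ.erase i.succ, f k = f 0 * ∏ k ∈ Finset.univ.erase i, f k.succ := by
  rw [erase_succ_eq, Finset.prod_insert (by simp [Fin.succ_ne_zero, eq_comm]),
    Finset.prod_image (fun a _ b _ h => Fin.succ_injective _ h)]

end helpers

section hrec
variable {F : Type*} [CommRing F] {n : ℕ}

lemma hsymm_rec (x : Fin (n+1) → F) (p : ℕ) :
    ∑ d ∈ Finset.Nat.antidiagonalTuple (n+1) (p+1), ∏ i, x i ^ d i =
      x 0 * ∑ d ∈ Finset.Nat.antidiagonalTuple (n+1) p, ∏ i, x i ^ d i +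
      ∑ d ∈ Finset.Nat.antidiagonalTuple n (p+1), ∏ i, x i.succ ^ d i := by
  classical
  rw [← Finset.sum_filter_add_sum_filter_not
      (Finset.Nat.antidiagonalTuple (n+1) (p+1)) (fun d => d 0 = 0), add_comm, Finset.mul_sum]
  congr 1
  · -- d 0 ≠ 0 part
    refine Finset.sum_nbij' (fun d => Fin.cons (d 0 - 1) (Fin.tail d))
      (fun e => Fin.cons (e 0 + 1) (Fin.tail e)) ?_ ?_ ?_ ?_ ?_
    · intro d hd
      simp only [Finset.mem_filter, Finset.Nat.mem_antidiagonalTuple] at hd ⊢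
      obtain ⟨h1, h2⟩ := hd
      rw [Fin.sum_univ_succ] at h1 ⊢
      simp only [Fin.cons_zero, Fin.cons_succ, Fin.tail] at *
      omega
    · intro e he
      simp only [Finset.mem_filter, Finset.Nat.mem_antidiagonalTuple] at he ⊢
      rw [Fin.sum_univ_succ] at he
      rw [Fin.sum_univ_succ]
      simp only [Fin.cons_zero, Fin.cons_succ, Fin.tail] at *
      omega
    · intro d hd
      simp only [Finset.mem_filter] at hd
      have h2 : d 0 - 1 + 1 = d 0 := by omega
      simp only [Fin.tail_cons, Fin.cons_zero, h2, Fin.cons_self_tail]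
    · intro e he
      simp only [Fin.tail_cons, Fin.cons_zero, Nat.add_sub_cancel, Fin.cons_self_tail]
    · intro d hd
      simp only [Finset.mem_filter] at hd
      rw [Fin.prod_univ_succ, Fin.prod_univ_succ]
      simp only [Fin.cons_zero, Fin.cons_succ, Fin.tail]
      rw [← mul_assoc, ← pow_succ']
      rw [show d 0 - 1 + 1 = d 0 by omega]
  · -- d 0 = 0 part equals the n-variable sum
    refine Finset.sum_nbij' Fin.tail (fun t => Fin.cons (0:ℕ) t) ?_ ?_ ?_ ?_ ?_
    · intro d hd
      simp only [Finset.mem_filter, Finset.Nat.mem_antidiagonalTuple] at hd ⊢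
      rw [Fin.sum_univ_succ, hd.2, zero_add] at hd
      exact hd.1
    · intro t ht
      simp only [Finset.mem_filter, Finset.Nat.mem_antidiagonalTuple] at ht ⊢
      constructor
      · rw [Fin.sum_univ_succ]
        simpa using ht
      · simp
    · intro d hd
      simp only [Finset.mem_filter] at hd
      rw [← hd.2]
      exact Fin.cons_self_tail d
    · intro t ht
      exact Fin.tail_cons (α := fun _ => ℕ) 0 t
    · intro d hd
      simp only [Finset.mem_filter] at hd
      rw [Fin.prod_univ_succ, hd.2, pow_zero, one_mul]
      rfl

end hrec

section lagrange
open Polynomial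

lemma lagrange_zero {F : Type*} [Field F] {n : ℕ} (hn : 2 ≤ n) (x : Fin n → F)
    (hx : Function.Injective x) :
    ∑ j : Fin n, 1 / ∏ k ∈ Finset.univ.erase j, (x j - x k) = 0 := by
  have : NeZero n := ⟨by omega⟩
  have hinj : Set.InjOn x ↑(Finset.univ : Finset (Fin n)) := Function.Injective.injOn hx
  have hs : (Finset.univ : Finset (Fin n)).Nonempty := Finset.univ_nonempty
  have hsum := Lagrange.sum_basis hinj hs
  have hcoeff : ∀ j : Fin n,
      (Lagrange.basis Finset.univ x j).coeff (n - 1) =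
        (∏ k ∈ Finset.univ.erase j, (x j - x k))⁻¹ := by
    intro j
    have hdeg := Lagrange.natDegree_basis hinj (Finset.mem_univ j)
    rw [Finset.card_univ, Fintype.card_fin] at hdeg
    rw [← hdeg, ← Polynomial.leadingCoeff]
    unfold Lagrange.basis
    rw [Polynomial.leadingCoeff_prod, ← Finset.prod_inv_distrib]
    apply Finset.prod_congr rfl
    intro k hk
    rw [Lagrange.basisDivisor, Polynomial.leadingCoeff_mul, Polynomial.leadingCoeff_C,
      (Polynomial.monic_X_sub_C _).leadingCoeff, mul_one]
  have h2 := congrArg (fun q : F[X] => q.coeff (n - 1)) hsum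
  simp only [Polynomial.finset_sum_coeff, hcoeff] at h2
  rw [Polynomial.coeff_one, if_neg (by omega : ¬ (n : ℕ) - 1 = 0)] at h2
  rw [← h2]
  apply Finset.sum_congr rfl
  intro j _
  rw [one_div]

end lagrange

section srec
variable {F : Type*} [Field F] {n : ℕ}

lemma S_rec (x : Fin (n+1) → F) (hx : Function.Injective x) (m : ℕ) :
    ∑ j : Fin (n+1), x j ^ (m+1) / ∏ k ∈ Finset.univ.erase j, (x j - x k)
      = x 0 * ∑ j : Fin (n+1), x j ^ m / ∏ k ∈ Finset.univ.erase j, (x j - x k)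
        + ∑ j : Fin n, x j.succ ^ m / ∏ k ∈ Finset.univ.erase j, (x j.succ - x k.succ) := by
  rw [Fin.sum_univ_succ (f := fun j => x j ^ (m+1) / ∏ k ∈ Finset.univ.erase j, (x j - x k)),
    Fin.sum_univ_succ (f := fun j => x j ^ m / ∏ k ∈ Finset.univ.erase j, (x j - x k))]
  rw [mul_add, ← mul_div_assoc, ← pow_succ', add_assoc]
  congr 1
  rw [Finset.mul_sum, ← Finset.sum_add_distrib]
  apply Finset.sum_congr rfl
  intro i _
  rw [prod_erase_succ (fun k => x i.succ - x k) i]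
  have hc : x i.succ - x 0 ≠ 0 := sub_ne_zero.mpr (hx.ne (Fin.succ_ne_zero i))
  have key : x i.succ ^ (m+1) =
      x 0 * x i.succ ^ m + (x i.succ - x 0) * x i.succ ^ m := by ring
  rw [key, add_div, mul_div_assoc, mul_div_mul_left _ _ hc]

end srec

lemma key {F : Type*} [Field F] :
    ∀ (n : ℕ) (x : Fin n → F), Function.Injective x → ∀ m : ℕ,
    ∑ j : Fin n, x j ^ m / ∏ k ∈ Finset.univ.erase j, (x j - x k) =
      if n ≤ m + 1 then ∑ d ∈ Finset.Nat.antidiagonalTuple n (m + 1 - n), ∏ i, x i ^ d i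
      else 0 := by
  intro n
  induction n with
  | zero =>
    intro x hx m
    rw [if_pos (by omega)]
    simp
  | succ n ih =>
    intro x hx m
    induction m with
    | zero =>
      by_cases h1 : n = 0
      · subst h1
        simp [Finset.Nat.antidiagonalTuple_zero_right]
      · rw [if_neg (by omega)]
        simpa using lagrange_zero (show 2 ≤ n + 1 by omega) x hx
    | succ m ihm =>
      have ih' := ih (x ∘ Fin.succ) (hx.comp (Fin.succ_injective n)) m
      simp only [Function.comp_apply] at ih'
      rw [S_rec x hx m, ihm, ih']
      by_cases hc1 : n ≤ m
      · rw [if_pos (by omega), if_pos (by omega), if_pos (by omega)]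
        have e1 : m + 1 - (n + 1) = m - n := by omega
        have e2 : m + 1 + 1 - (n + 1) = (m - n) + 1 := by omega
        have e3 : m + 1 - n = (m - n) + 1 := by omega
        rw [e1, e2, e3]
        exact (hsymm_rec x (m - n)).symm
      · by_cases hc2 : n = m + 1
        · rw [if_neg (by omega), if_pos (by omega), if_pos (by omega)]
          rw [show m + 1 - n = 0 by omega, show m + 1 + 1 - (n + 1) = 0 by omega]
          simp [Finset.Nat.antidiagonalTuple_zero_right]
        · rw [if_neg (by omega), if_neg (by omega), if_neg (by omega)]
          simp


/-- For pairwise distinct `x_1, …, x_n` in a field `F` and `m ≥ n - 1`,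
`∑_j x_j^m / ∏_{k ≠ j} (x_j - x_k) = h_{m-n+1}(x_1, …, x_n)`. -/
theorem stmt5 (F : Type*) [Field F] (n : ℕ) (hn : 1 ≤ n) (x : Fin n → F)
    (hx : Function.Injective x) (m : ℕ) (hm : n - 1 ≤ m) :
    ∑ j : Fin n, x j ^ m / ∏ k ∈ Finset.univ.erase j, (x j - x k) =
      ∑ d ∈ Finset.Nat.antidiagonalTuple n (m + 1 - n), ∏ i, x i ^ d i := by
  rw [key n x hx m, if_pos (by omega)]
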